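/- For the Chebyshev map T₃(x) = 4x³ - 3x with invariant density h(x) = 1/(π√(1-x²)), any function of the form c(x,y) = h(x)γ₀(y) + x h(x) γ₁(y) satisfies the functional equation c(x') = ∑_{x ∈ T₃^{-1}(x')} (1/|T₃'(x)|)[c(x) - (1/6)x³ h(x) r(y)] for all x' if and only if γ₁(y) = -(1/24) r(y) (with γ₀ arbitrary). -/

import Mathlib

open Real

noncomputable def h : ℝ → ℝ := fun x => 1 / (π * Real.sqrt (1 - x ^ 2))

noncomputable def T₃ : ℝ → ℝ := fun x => 4 * x ^ 3 - 3 * x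

lemma derivT3 (x : ℝ) : deriv T₃ x = 12 * x ^ 2 - 3 := by
  have h1 : HasDerivAt (fun x : ℝ => 4*x^3 - 3*x) (12*x^2-3) x := by
    have := ((hasDerivAt_pow 3 x).const_mul (4:ℝ)).sub ((hasDerivAt_id x).const_mul (3:ℝ))
    exact this.congr_deriv (by rw [show (3:ℕ)-1 = 2 from rfl]; push_cast; ring)
  exact h1.deriv

set_option maxHeartbeats 1600000 in
lemma key (x' : ℝ) (hx' : x' ∈ Set.Ioo (-1 : ℝ) 1) (G0 G1 R : ℝ) :
    ∑ᶠ x ∈ {x : ℝ | x ∈ Set.Icc (-1 : ℝ) 1 ∧ T₃ x = x'},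
      (1 / |deriv T₃ x|) * ((h x * G0 + x * h x * G1) - (1 / 6) * x ^ 3 * h x * R)
      = h x' * G0 - x' * h x' * ((1/24) * R) := by
  obtain ⟨hx1, hx2⟩ := hx'
  have hpi : (0:ℝ) < π := Real.pi_pos
  obtain ⟨θ, hθdef⟩ : ∃ θ, θ = Real.arccos x' := ⟨_, rfl⟩
  have hcosθ : Real.cos θ = x' := by
    rw [hθdef]; exact Real.cos_arccos (by linarith) (by linarith)
  have hθ1 : 0 < θ := hθdef ▸ Real.arccos_pos.mpr hx2
  have hθ2 : θ < π := by
    rcases lt_or_eq_of_le (hθdef ▸ Real.arccos_le_pi x') with hlt | heq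
    · exact hlt
    · exfalso; rw [heq, Real.cos_pi] at hcosθ; linarith
  obtain ⟨a, hadef⟩ : ∃ a, a = Real.cos (θ/3) := ⟨_, rfl⟩
  obtain ⟨s, hsdef⟩ : ∃ s, s = Real.sin (θ/3) := ⟨_, rfl⟩
  have hs : 0 < s := hsdef ▸ Real.sin_pos_of_pos_of_lt_pi (by linarith) (by linarith)
  have has : s^2 + a^2 = 1 := by rw [hadef, hsdef]; exact Real.sin_sq_add_cos_sq (θ/3)
  have ha : 1/2 < a := by
    have := Real.cos_lt_cos_of_nonneg_of_le_pi (by positivity : (0:ℝ) ≤ θ/3)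
      (by linarith : π/3 ≤ π) (by linarith : θ/3 < π/3)
    rw [Real.cos_pi_div_three] at this
    rw [hadef]; exact this
  obtain ⟨r3, hr3, hr3pos⟩ : ∃ r, r^2 = 3 ∧ 0 < r :=
    ⟨Real.sqrt 3, Real.sq_sqrt (by norm_num), Real.sqrt_pos.mpr (by norm_num)⟩
  have hsa3 : s < r3 * a := by
    by_contra hcon
    push_neg at hcon
    have h1 : (r3*a)^2 ≤ s^2 := by
      have : 0 ≤ r3 * a := by positivity
      nlinarith
    nlinarith
  obtain ⟨b, hbdef⟩ : ∃ b : ℝ, b = (-a - r3*s)/2 := ⟨_, rfl⟩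
  obtain ⟨c, hcdef⟩ : ∃ c : ℝ, c = (-a + r3*s)/2 := ⟨_, rfl⟩
  -- T₃ a = x'
  have hTa : T₃ a = x' := by
    have h3 : Real.cos (3 * (θ/3)) = 4 * Real.cos (θ/3)^3 - 3 * Real.cos (θ/3) :=
      Real.cos_three_mul (θ/3)
    rw [show (3:ℝ) * (θ/3) = θ by ring] at h3
    simp only [T₃]
    rw [hadef, ← h3, hcosθ]
  -- factorization
  have hfact : ∀ x : ℝ, T₃ x - x' = 4 * (x - a) * (x - b) * (x - c) := by
    intro x
    rw [← hTa]
    simp only [T₃]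
    rw [hbdef, hcdef]
    linear_combination (x - a) * s^2 * hr3 + 3 * (x-a) * has
  -- 1 - b², 1 - c²
  have hb2 : 1 - b^2 = ((r3*a - s)/2)^2 := by
    rw [hbdef]; linear_combination (-1/4)*hr3 + (-1/4 - r3^2/4)*has
  have hc2 : 1 - c^2 = ((r3*a + s)/2)^2 := by
    rw [hcdef]; linear_combination (-1/4)*hr3 + (-1/4 - r3^2/4)*has
  -- sqrt computations
  have hsq_a : Real.sqrt (1 - a^2) = s := by
    rw [show (1:ℝ) - a^2 = s^2 by linarith, Real.sqrt_sq hs.le]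
  have hsq_b : Real.sqrt (1 - b^2) = (r3*a - s)/2 := by
    rw [hb2]; exact Real.sqrt_sq (by linarith)
  have hsq_c : Real.sqrt (1 - c^2) = (r3*a + s)/2 := by
    rw [hc2]; exact Real.sqrt_sq (by positivity)
  -- memberships
  have hamem : a ∈ Set.Icc (-1:ℝ) 1 := by
    rw [hadef]; exact ⟨Real.neg_one_le_cos _, Real.cos_le_one _⟩
  have hbmem : b ∈ Set.Icc (-1:ℝ) 1 := by
    constructor
    · nlinarith [sq_nonneg (b+1), sq_nonneg ((r3*a - s)/2)]
    · nlinarith [sq_nonneg (b-1), sq_nonneg ((r3*a - s)/2)]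
  have hcmem : c ∈ Set.Icc (-1:ℝ) 1 := by
    constructor
    · nlinarith [sq_nonneg (c+1), sq_nonneg ((r3*a + s)/2)]
    · nlinarith [sq_nonneg (c-1), sq_nonneg ((r3*a + s)/2)]
  have hTb : T₃ b = x' := by
    have h0 : T₃ b - x' = 0 := by rw [hfact b]; ring
    linarith
  have hTc : T₃ c = x' := by
    have h0 : T₃ c - x' = 0 := by rw [hfact c]; ring
    linarith
  -- distinctness
  have hrs : 0 < r3 * s := by positivity
  have hab : a ≠ b := by rw [hbdef]; intro hh; nlinarith
  have hac : a ≠ c := by rw [hcdef]; intro hh; nlinarith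
  have hbc : b ≠ c := by rw [hbdef, hcdef]; intro hh; nlinarith
  -- set equality
  have hset : {x : ℝ | x ∈ Set.Icc (-1 : ℝ) 1 ∧ T₃ x = x'} = (↑({a, b, c} : Finset ℝ) : Set ℝ) := by
    ext x
    simp only [Set.mem_setOf_eq, Finset.coe_insert, Finset.coe_singleton, Set.mem_insert_iff,
      Set.mem_singleton_iff]
    constructor
    · rintro ⟨hxm, hTx⟩
      have h0 : 4 * (x - a) * (x - b) * (x - c) = 0 := by rw [← hfact x, hTx]; ring
      rcases mul_eq_zero.mp h0 with h1 | h1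
      · rcases mul_eq_zero.mp h1 with h2 | h2
        · rcases mul_eq_zero.mp h2 with h3 | h3
          · norm_num at h3
          · left; linarith
        · right; left; linarith
      · right; right; linarith
    · rintro (rfl | rfl | rfl)
      exacts [⟨hamem, hTa⟩, ⟨hbmem, hTb⟩, ⟨hcmem, hTc⟩]
  rw [hset, finsum_mem_coe_finset]
  rw [Finset.sum_insert (by simp [hab, hac]), Finset.sum_insert (by simp [hbc]),
    Finset.sum_singleton]
  -- derivative abs values
  have hDa : |deriv T₃ a| = 3*(4*a^2 - 1) := by
    rw [derivT3, abs_of_pos (by nlinarith : (0:ℝ) < 12*a^2 - 3)]; ring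
  have hDbv : 12*b^2 - 3 = 6*s*(s + r3*a) := by
    rw [hbdef]; linear_combination 3*s^2*hr3 + 3*has
  have hDcv : 12*c^2 - 3 = -(6*s*(r3*a - s)) := by
    rw [hcdef]; linear_combination 3*s^2*hr3 + 3*has
  have hDb : |deriv T₃ b| = 6*s*(s + r3*a) := by
    rw [derivT3, hDbv]
    exact abs_of_pos (by positivity)
  have hDc : |deriv T₃ c| = 6*s*(r3*a - s) := by
    rw [derivT3, hDcv, abs_neg]
    exact abs_of_pos (by nlinarith)
  -- h values
  have hha : h a = 1/(π*s) := by simp only [h]; rw [hsq_a]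
  have hhb : h b = 1/(π*((r3*a - s)/2)) := by simp only [h]; rw [hsq_b]
  have hhc : h c = 1/(π*((r3*a + s)/2)) := by simp only [h]; rw [hsq_c]
  obtain ⟨H, hH⟩ : ∃ H : ℝ, H = 1/(3*π*s*(4*a^2 - 1)) := ⟨_, rfl⟩
  have hne1 : π ≠ 0 := ne_of_gt hpi
  have hne2 : s ≠ 0 := ne_of_gt hs
  have hne3 : (4*a^2 - 1 : ℝ) ≠ 0 := by nlinarith
  have hne4 : (r3*a - s : ℝ) ≠ 0 := by linarith
  have hne5 : (r3*a + s : ℝ) ≠ 0 := by positivity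
  have hne6 : (s + r3*a : ℝ) ≠ 0 := by positivity
  -- h x'
  have hsinθ : Real.sqrt (1 - x'^2) = s * (4*a^2 - 1) := by
    have h1 : Real.sin θ = Real.sqrt (1 - x'^2) := by rw [hθdef]; exact Real.sin_arccos x'
    have h2 : Real.sin (3*(θ/3)) = 3 * Real.sin (θ/3) - 4 * Real.sin (θ/3)^3 :=
      Real.sin_three_mul (θ/3)
    rw [show (3:ℝ)*(θ/3) = θ by ring, ← hsdef] at h2
    rw [← h1, h2]
    linear_combination (-4*s)*has
  have hhx : h x' = 3*H := by
    simp only [h]; rw [hsinθ, hH]; field_simp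
  -- K lemmas
  have K_a : 1/|deriv T₃ a| * h a = H := by
    rw [hDa, hha, hH]; field_simp
  have K_b : 1/|deriv T₃ b| * h b = H := by
    rw [hDb, hhb, hH]; field_simp
    rw [eq_div_iff (by nlinarith)]
    linear_combination (-6*a^2)*hr3 + 6*has
  have K_c : 1/|deriv T₃ c| * h c = H := by
    rw [hDc, hhc, hH]; field_simp
    rw [eq_div_iff (by nlinarith)]
    linear_combination (-6*a^2)*hr3 + 6*has
  -- algebraic sums
  have sum3 : a + b + c = -0 := by rw [hbdef, hcdef]; ring
  have sum3' : a + b + c = 0 := by rw [hbdef, hcdef]; ring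
  have cube3 : a^3 + b^3 + c^3 = (3/4)*(4*a^3 - 3*a) := by
    rw [hbdef, hcdef]
    linear_combination (-3/4)*a*s^2*hr3 + (-9/4)*a*has
  have hx'eq : x' = 4*a^3 - 3*a := by rw [← hTa]; simp [T₃]
  have expand : ∀ x : ℝ,
      (1 / |deriv T₃ x|) * ((h x * G0 + x * h x * G1) - (1 / 6) * x ^ 3 * h x * R)
      = ((1/|deriv T₃ x|) * h x) * (G0 + x*G1 - (1/6)*x^3*R) := by
    intro x; ring
  rw [expand a, expand b, expand c, K_a, K_b, K_c, hhx, hx'eq]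
  linear_combination (H*G1)*sum3' + (-(H*R)/6)*cube3


/-- For T₃, c(x,y) = h(x)γ₀(y) + x h(x)γ₁(y) solves the functional equation
iff γ₁ = -(1/24) r (γ₀ arbitrary). -/
theorem T3_functional_equation (γ₀ γ₁ r : ℝ → ℝ) :
    (∀ x' ∈ Set.Ioo (-1 : ℝ) 1, ∀ y : ℝ,
      h x' * γ₀ y + x' * h x' * γ₁ y =
        ∑ᶠ x ∈ {x : ℝ | x ∈ Set.Icc (-1 : ℝ) 1 ∧ T₃ x = x'},
          (1 / |deriv T₃ x|) *
            ((h x * γ₀ y + x * h x * γ₁ y) - (1 / 6) * x ^ 3 * h x * r y)) ↔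
    (∀ y : ℝ, γ₁ y = -(1 / 24) * r y) := by
  constructor
  · intro Hy y
    have hmem : (1/2:ℝ) ∈ Set.Ioo (-1:ℝ) 1 := by norm_num
    have heq := Hy (1/2) hmem y
    rw [key (1/2) hmem (γ₀ y) (γ₁ y) (r y)] at heq
    have hh : (0:ℝ) < h (1/2) := by
      simp only [h]
      apply div_pos one_pos
      apply mul_pos Real.pi_pos
      apply Real.sqrt_pos.mpr
      norm_num
    have h2 : (1/2:ℝ) * h (1/2) * (γ₁ y + (1/24)*r y) = 0 := by linarith
    have hne : (1/2:ℝ) * h (1/2) ≠ 0 := by positivity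
    have h3 := (mul_eq_zero.mp h2).resolve_left hne
    linarith
  · intro Hy x' hx' y
    rw [key x' hx' (γ₀ y) (γ₁ y) (r y), Hy y]
    ring
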